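/- arXiv:0706.3752 — 2 statements merged into one kernel-verified Lean document; each statement's English description precedes it below -/
import Mathlib

section
/- Let a > 0 and set ε = 2·Q(a), where Q(x) = ∫_x^∞ φ(t) dt and φ(t) = (1/√(2π))·exp(−t²/2), so that 0 < ε < 1. Define f₁(z) = (φ(z−a) − φ(z+a))/(1−ε) for z ≥ 0 and f₁(z) = 0 for z < 0, and define f₀(z) = min(φ(z−a), φ(z+a))/ε for all z. Then: (i) f₁ and f₀ are nonnegative and each integrates to 1 over ℝ (i.e., they are probability density functions), and (ii) for every real z, (1−ε)·f₁(z) + ε·f₀(z) = φ(z−a). Consequently, transmitting over a binary erasure channel with erasure probability ε followed by the memoryless channel with conditional densities f₁, f₀ (and the mirror density f₋₁(z) = f₁(−z)) reproduces exactly the BI-AWGN conditional output density φ(z−a). -/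
/-- The standard Gaussian probability density function
`φ(t) = (1/√(2π)) · exp(−t²/2)`. -/
noncomputable def stdGaussPDF (t : ℝ) : ℝ :=
  (1 / Real.sqrt (2 * Real.pi)) * Real.exp (-t ^ 2 / 2)

/-- The Gaussian tail function `Q(x) = ∫_x^∞ φ(t) dt`. -/
noncomputable def gaussQ (x : ℝ) : ℝ :=
  ∫ t in Set.Ioi x, stdGaussPDF t

open MeasureTheory Set

lemma sg_pos (t : ℝ) : 0 < stdGaussPDF t := by
  unfold stdGaussPDF; positivity

lemma sg_even (t : ℝ) : stdGaussPDF (-t) = stdGaussPDF t := by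
  unfold stdGaussPDF; ring_nf

lemma sg_le {u v : ℝ} (h : u ^ 2 ≤ v ^ 2) : stdGaussPDF v ≤ stdGaussPDF u := by
  unfold stdGaussPDF
  have : Real.exp (-v ^ 2 / 2) ≤ Real.exp (-u ^ 2 / 2) := by
    apply Real.exp_le_exp.2; linarith
  have hc : (0:ℝ) ≤ 1 / Real.sqrt (2 * Real.pi) := by positivity
  exact mul_le_mul_of_nonneg_left this hc

lemma sg_integrable : Integrable stdGaussPDF := by
  unfold stdGaussPDF
  apply Integrable.const_mul
  have : ∀ t : ℝ, Real.exp (-t ^ 2 / 2) = Real.exp (-(1/2 : ℝ) * t ^ 2) := by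
    intro t; ring_nf
  simp_rw [this]
  exact integrable_exp_neg_mul_sq (by norm_num)

lemma sg_intOn (s : Set ℝ) : IntegrableOn stdGaussPDF s := sg_integrable.integrableOn

lemma sg_integral : ∫ t, stdGaussPDF t = 1 := by
  unfold stdGaussPDF
  rw [integral_const_mul]
  have : ∀ t : ℝ, Real.exp (-t ^ 2 / 2) = Real.exp (-(1/2 : ℝ) * t ^ 2) := by
    intro t; ring_nf
  simp_rw [this, integral_gaussian]
  rw [one_div, inv_mul_eq_one₀ (by positivity)]
  have h2 : Real.pi / ((1:ℝ)/2) = 2 * Real.pi := by field_simp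
  rw [h2]

/-- Translation of a set integral over `Ioi`. -/
lemma shift_Ioi (c b : ℝ) :
    ∫ z in Ioi c, stdGaussPDF (z + b) = ∫ z in Ioi (c + b), stdGaussPDF z := by
  have A : MeasurableEmbedding fun x : ℝ => x + b :=
    (Homeomorph.addRight b).isClosedEmbedding.measurableEmbedding
  have := A.setIntegral_map (μ := volume) stdGaussPDF (Ioi (c + b))
  rw [map_add_right_eq_self volume b] at this
  rw [this]
  congr 1
  ext x; simp [mem_preimage]

lemma shift_Iio (c b : ℝ) :
    ∫ z in Iio c, stdGaussPDF (z + b) = ∫ z in Iio (c + b), stdGaussPDF z := by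
  have A : MeasurableEmbedding fun x : ℝ => x + b :=
    (Homeomorph.addRight b).isClosedEmbedding.measurableEmbedding
  have := A.setIntegral_map (μ := volume) stdGaussPDF (Iio (c + b))
  rw [map_add_right_eq_self volume b] at this
  rw [this]
  congr 1
  ext x; simp [mem_preimage]

lemma Q_pos (x : ℝ) : 0 < gaussQ x := by
  unfold gaussQ
  rw [setIntegral_pos_iff_support_of_nonneg_ae]
  · have : (Function.support stdGaussPDF) = univ := by
      ext t; simp [Function.mem_support, (sg_pos t).ne']
    rw [this, univ_inter]
    simp [Real.volume_Ioi]
  · exact Filter.Eventually.of_forall fun t => (sg_pos t).le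
  · exact sg_intOn _

lemma Q_add_Iic (x : ℝ) : (∫ t in Iic x, stdGaussPDF t) + gaussQ x = 1 := by
  unfold gaussQ
  rw [intervalIntegral.integral_Iic_add_Ioi (sg_intOn _) (sg_intOn _), sg_integral]

lemma Iic_neg_eq_Q (x : ℝ) : (∫ t in Iic (-x), stdGaussPDF t) = gaussQ x := by
  have h := integral_comp_neg_Iic (-x) stdGaussPDF
  simp_rw [sg_even] at h
  rw [h]; unfold gaussQ; rw [neg_neg]

lemma Q_zero : gaussQ 0 = 1 / 2 := by
  have h1 := Q_add_Iic 0
  have h2 := Iic_neg_eq_Q 0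
  rw [neg_zero] at h2
  rw [h2] at h1
  linarith

lemma Q_lt_half {x : ℝ} (hx : 0 < x) : gaussQ x < 1 / 2 := by
  have hsplit : gaussQ 0 = (∫ t in Ioc 0 x, stdGaussPDF t) + gaussQ x := by
    unfold gaussQ
    rw [← setIntegral_union (Ioc_disjoint_Ioi le_rfl) measurableSet_Ioi
      (sg_intOn _) (sg_intOn _), Ioc_union_Ioi_eq_Ioi hx.le]
  have hpos : 0 < ∫ t in Ioc 0 x, stdGaussPDF t := by
    rw [setIntegral_pos_iff_support_of_nonneg_ae]
    · have : (Function.support stdGaussPDF) = univ := by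
        ext t; simp [Function.mem_support, (sg_pos t).ne']
      rw [this, univ_inter]
      simp [Real.volume_Ioc, hx]
    · exact Filter.Eventually.of_forall fun t => (sg_pos t).le
    · exact sg_intOn _
  rw [Q_zero] at hsplit
  linarith

/-- Let `a > 0` and set `ε = 2·Q(a)`, so that `0 < ε < 1`.  Define
`f₁(z) = (φ(z−a) − φ(z+a))/(1−ε)` for `z ≥ 0` and `f₁(z) = 0` for `z < 0`, and
`f₀(z) = min(φ(z−a), φ(z+a))/ε` for all `z`.  Then `f₁` and `f₀` are nonnegative and each
integrates to `1` over `ℝ` (i.e., they are probability density functions), and for every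
real `z`, `(1−ε)·f₁(z) + ε·f₀(z) = φ(z−a)`: the BI-AWGN conditional output density is
reproduced exactly by a binary erasure channel with erasure probability `ε` followed by
the channel with conditional densities `f₁, f₀`. -/
theorem gaussian_erasure_decomposition (a : ℝ) (ha : 0 < a)
    (ε : ℝ) (hε : ε = 2 * gaussQ a)
    (f₁ f₀ : ℝ → ℝ)
    (hf₁ : ∀ z : ℝ, f₁ z =
      if 0 ≤ z then (stdGaussPDF (z - a) - stdGaussPDF (z + a)) / (1 - ε) else 0)
    (hf₀ : ∀ z : ℝ, f₀ z = min (stdGaussPDF (z - a)) (stdGaussPDF (z + a)) / ε) :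
    (0 < ε ∧ ε < 1) ∧
    (∀ z : ℝ, 0 ≤ f₁ z) ∧ (∫ z : ℝ, f₁ z = 1) ∧
    (∀ z : ℝ, 0 ≤ f₀ z) ∧ (∫ z : ℝ, f₀ z = 1) ∧
    (∀ z : ℝ, (1 - ε) * f₁ z + ε * f₀ z = stdGaussPDF (z - a)) := by
  have hε_pos : 0 < ε := by rw [hε]; linarith [Q_pos a]
  have hε_lt : ε < 1 := by rw [hε]; linarith [Q_lt_half ha]
  have h1ε : 0 < 1 - ε := by linarith
  -- pointwise order of the two shifted gaussians
  have hord : ∀ z : ℝ, 0 ≤ z → stdGaussPDF (z + a) ≤ stdGaussPDF (z - a) := by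
    intro z hz
    apply sg_le; nlinarith
  have hord' : ∀ z : ℝ, z ≤ 0 → stdGaussPDF (z - a) ≤ stdGaussPDF (z + a) := by
    intro z hz
    apply sg_le; nlinarith
  have hmin : ∀ z : ℝ, min (stdGaussPDF (z - a)) (stdGaussPDF (z + a)) =
      if 0 ≤ z then stdGaussPDF (z + a) else stdGaussPDF (z - a) := by
    intro z
    by_cases hz : 0 ≤ z
    · simp [hz, min_eq_right (hord z hz)]
    · simp [hz, min_eq_left (hord' z (le_of_not_ge hz))]
  -- nonnegativity
  have hf₁_nonneg : ∀ z : ℝ, 0 ≤ f₁ z := by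
    intro z; rw [hf₁ z]
    by_cases hz : 0 ≤ z
    · simp only [if_pos hz]
      have h1 : 0 ≤ stdGaussPDF (z - a) - stdGaussPDF (z + a) := by
        linarith [hord z hz]
      positivity
    · simp [hz]
  have hf₀_nonneg : ∀ z : ℝ, 0 ≤ f₀ z := by
    intro z; rw [hf₀ z]
    have := (sg_pos (z - a)).le
    have := (sg_pos (z + a)).le
    positivity
  -- translated integrals
  have hIoi_sub : ∫ z in Ioi (0:ℝ), stdGaussPDF (z - a) = 1 - gaussQ a := by
    have h := shift_Ioi 0 (-a)
    simp only [← sub_eq_add_neg, zero_sub] at h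
    rw [h]
    have hsplit := Q_add_Iic (-a)
    rw [Iic_neg_eq_Q a] at hsplit
    have h2 : gaussQ (-a) = ∫ z in Ioi (-a), stdGaussPDF z := rfl
    rw [h2] at hsplit
    linarith
  have hIoi_add : ∫ z in Ioi (0:ℝ), stdGaussPDF (z + a) = gaussQ a := by
    have h := shift_Ioi 0 a
    rw [zero_add] at h
    exact h
  have hIio_sub : ∫ z in Iio (0:ℝ), stdGaussPDF (z - a) = gaussQ a := by
    have h := shift_Iio 0 (-a)
    simp only [← sub_eq_add_neg, zero_sub] at h
    rw [h, ← Iic_neg_eq_Q a]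
    exact (integral_Iic_eq_integral_Iio).symm
  -- integrability of shifted gaussians
  have hint_sub : Integrable (fun z : ℝ => stdGaussPDF (z - a)) := by
    simpa using sg_integrable.comp_sub_right a
  have hint_add : Integrable (fun z : ℝ => stdGaussPDF (z + a)) := by
    simpa using sg_integrable.comp_add_right a
  -- integral of f₁
  have hf₁_int : ∫ z : ℝ, f₁ z = 1 := by
    have heq : f₁ = Set.indicator (Ici (0:ℝ))
        (fun z => (stdGaussPDF (z - a) - stdGaussPDF (z + a)) / (1 - ε)) := by
      funext z
      rw [hf₁ z]
      by_cases hz : 0 ≤ z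
      · simp [Set.indicator_apply, hz]
      · simp [Set.indicator_apply, hz]
    rw [heq, integral_indicator measurableSet_Ici]
    rw [← integral_Ici_eq_integral_Ioi] at hIoi_sub hIoi_add
    have : ∫ z in Ici (0:ℝ), (stdGaussPDF (z - a) - stdGaussPDF (z + a)) / (1 - ε)
        = ((1 - gaussQ a) - gaussQ a) / (1 - ε) := by
      rw [← hIoi_sub, ← hIoi_add]
      rw [← integral_sub hint_sub.integrableOn hint_add.integrableOn]
      rw [← integral_div]
    rw [this, hε]
    have hne : (1 : ℝ) - 2 * gaussQ a ≠ 0 := by rw [← hε]; linarith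
    rw [div_eq_one_iff_eq hne]
    ring
  -- integral of f₀
  have hf₀_int : ∫ z : ℝ, f₀ z = 1 := by
    have heq : f₀ = fun z => (Set.indicator (Ici (0:ℝ)) (fun z => stdGaussPDF (z + a)) z
        + Set.indicator (Iio (0:ℝ)) (fun z => stdGaussPDF (z - a)) z) / ε := by
      funext z
      rw [hf₀ z, hmin z]
      by_cases hz : 0 ≤ z
      · simp [Set.indicator_apply, hz, not_lt.2 hz]
      · simp [Set.indicator_apply, hz, lt_of_not_ge hz]
    rw [heq]
    simp_rw [div_eq_mul_inv]
    rw [integral_mul_const]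
    rw [integral_add
      (hint_add.indicator measurableSet_Ici) (hint_sub.indicator measurableSet_Iio)]
    rw [integral_indicator measurableSet_Ici, integral_indicator measurableSet_Iio]
    rw [← integral_Ici_eq_integral_Ioi] at hIoi_add
    rw [hIoi_add, hIio_sub, hε]
    have := (Q_pos a).ne'
    field_simp
    ring
  refine ⟨⟨hε_pos, hε_lt⟩, hf₁_nonneg, hf₁_int, hf₀_nonneg, hf₀_int, ?_⟩
  intro z
  rw [hf₁ z, hf₀ z, hmin z]
  by_cases hz : 0 ≤ z
  · rw [if_pos hz, if_pos hz]
    field_simp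
    ring
  · rw [if_neg hz, if_neg hz]
    field_simp
    ring
end

section
/- For every real λ > 0, twice the Gaussian tail probability at √(2λ) is at most the secrecy capacity of the type II AWGN wiretap channel: 2·Q(√(2λ)) ≤ (1/√π) ∫_ℝ exp(−(y−√λ)²) · log₂(1 + exp(−4y√λ)) dy, where Q(x) = ∫_x^∞ (1/√(2π))·exp(−t²/2) dt. Equivalently, the gap Δ = 1 − C_BI-AWGN(λ) − 2·Q(√(2λ)) is nonnegative, where C_BI-AWGN(λ) = 1 − (1/√π) ∫_ℝ exp(−(y−√λ)²) · log₂(1 + exp(−4y√λ)) dy. -/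
open MeasureTheory Set Real

lemma aux_le_logb {u : ℝ} (h0 : 0 ≤ u) (h1 : u ≤ 1) : u ≤ Real.logb 2 (1 + u) := by
  have h2 : Real.exp (u * Real.log 2) ≤ 1 + u := by
    have hc := convexOn_exp.2 (Set.mem_univ (0:ℝ)) (Set.mem_univ (Real.log 2))
      (by linarith : (0:ℝ) ≤ 1 - u) h0 (by ring)
    have hc' : Real.exp (u * Real.log 2) ≤ 1 - u + u * 2 := by
      simpa [Real.exp_log, mul_comm] using hc
    linarith
  have hlog : u * Real.log 2 ≤ Real.log (1 + u) := by
    have := Real.log_le_log (Real.exp_pos _) h2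
    simpa [Real.log_exp] using this
  rw [Real.logb, le_div_iff₀ (Real.log_pos (by norm_num))]
  linarith



/-- For every real `λ > 0`, twice the Gaussian tail probability at `√(2λ)` is at most the
secrecy capacity of the type II AWGN wiretap channel:
`2·Q(√(2λ)) ≤ (1/√π) ∫ exp(−(y−√λ)²) · log₂(1 + exp(−4y√λ)) dy`.
Equivalently, the gap `Δ = 1 − C_BI-AWGN(λ) − 2·Q(√(2λ))` is nonnegative, where
`C_BI-AWGN(λ) = 1 − (1/√π) ∫ exp(−(y−√λ)²) · log₂(1 + exp(−4y√λ)) dy`. -/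
theorem twoQ_le_secrecy_capacity (lam : ℝ) (hlam : 0 < lam) :
    2 * gaussQ (Real.sqrt (2 * lam)) ≤
      (1 / Real.sqrt Real.pi) *
        ∫ y : ℝ, Real.exp (-(y - Real.sqrt lam) ^ 2) *
          Real.logb 2 (1 + Real.exp (-4 * y * Real.sqrt lam)) := by
  set s := Real.sqrt lam with hs
  have hs0 : 0 < s := Real.sqrt_pos.mpr hlam
  set f : ℝ → ℝ := fun y => Real.exp (-(y - s) ^ 2) * Real.logb 2 (1 + Real.exp (-4 * y * s))
    with hf
  have hg2 : Integrable (fun y : ℝ => Real.exp (-(y + s) ^ 2)) := by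
    have := (integrable_exp_neg_mul_sq (one_pos)).comp_sub_right (-s) (μ := volume)
    simpa [sub_neg_eq_add] using this
  have hg1 : Integrable (fun y : ℝ => Real.exp (-(y - s) ^ 2)) := by
    have := (integrable_exp_neg_mul_sq (one_pos)).comp_sub_right s (μ := volume)
    simpa using this
  have hf_nonneg : ∀ y, 0 ≤ f y := by
    intro y
    apply mul_nonneg (Real.exp_nonneg _)
    refine Real.logb_nonneg (by norm_num) ?_
    nlinarith [Real.exp_nonneg (-4 * y * s)]
  have hident : ∀ y : ℝ, Real.exp (-(y - s) ^ 2) * Real.exp (-4 * y * s)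
      = Real.exp (-(y + s) ^ 2) := by
    intro y; rw [← Real.exp_add]; ring_nf
  have hf_le : ∀ y, f y ≤ (Real.log 2)⁻¹ * Real.exp (-(y + s) ^ 2) := by
    intro y
    have h1 : Real.logb 2 (1 + Real.exp (-4 * y * s)) ≤ (Real.log 2)⁻¹ * Real.exp (-4*y*s) := by
      rw [Real.logb, div_eq_inv_mul]
      refine mul_le_mul_of_nonneg_left ?_ (inv_nonneg.mpr (Real.log_nonneg (by norm_num)))
      have := Real.log_le_sub_one_of_pos
        (show (0:ℝ) < 1 + Real.exp (-4*y*s) by positivity)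
      linarith
    calc f y ≤ Real.exp (-(y - s) ^ 2) * ((Real.log 2)⁻¹ * Real.exp (-4*y*s)) :=
        mul_le_mul_of_nonneg_left h1 (Real.exp_nonneg _)
      _ = (Real.log 2)⁻¹ * (Real.exp (-(y - s) ^ 2) * Real.exp (-4*y*s)) := by ring
      _ = (Real.log 2)⁻¹ * Real.exp (-(y + s) ^ 2) := by rw [hident]
  have hf_cont : Continuous f := by
    refine (Real.continuous_exp.comp (by fun_prop)).mul ?_
    have h : Continuous fun y : ℝ => Real.log (1 + Real.exp (-4 * y * s)) :=
      Continuous.log (by fun_prop) (fun y => ne_of_gt (by positivity))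
    simpa [Real.logb] using h.div_const (Real.log 2)
  have hf_int : Integrable f := by
    refine (hg2.const_mul ((Real.log 2)⁻¹)).mono' hf_cont.aestronglyMeasurable ?_
    filter_upwards with y
    rw [Real.norm_eq_abs, abs_of_nonneg (hf_nonneg y)]
    exact hf_le y
  have hlow1 : ∫ y in Iic (0:ℝ), Real.exp (-(y - s) ^ 2) ≤ ∫ y in Iic (0:ℝ), f y := by
    apply setIntegral_mono_on hg1.integrableOn hf_int.integrableOn measurableSet_Iic
    intro y hy
    have hexp : (1:ℝ) ≤ Real.exp (-4 * y * s) :=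
      Real.one_le_exp (by nlinarith [mem_Iic.mp hy])
    have h1 : Real.logb 2 2 ≤ Real.logb 2 (1 + Real.exp (-4 * y * s)) :=
      Real.logb_le_logb_of_le (by norm_num) (by norm_num) (by linarith)
    rw [Real.logb_self_eq_one (by norm_num)] at h1
    calc Real.exp (-(y - s) ^ 2) = Real.exp (-(y - s) ^ 2) * 1 := by ring
      _ ≤ f y := mul_le_mul_of_nonneg_left h1 (Real.exp_nonneg _)
  have hlow2 : ∫ y in Ioi (0:ℝ), Real.exp (-(y + s) ^ 2) ≤ ∫ y in Ioi (0:ℝ), f y := by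
    apply setIntegral_mono_on hg2.integrableOn hf_int.integrableOn measurableSet_Ioi
    intro y hy
    have hy0 : 0 < y := mem_Ioi.mp hy
    have hu1 : Real.exp (-4 * y * s) ≤ 1 := Real.exp_le_one_iff.mpr (by nlinarith)
    have := aux_le_logb (Real.exp_nonneg (-4 * y * s)) hu1
    calc Real.exp (-(y + s) ^ 2) = Real.exp (-(y - s) ^ 2) * Real.exp (-4 * y * s) :=
        (hident y).symm
      _ ≤ f y := mul_le_mul_of_nonneg_left this (Real.exp_nonneg _)
  have htrans : ∫ y in Ioi (0:ℝ), Real.exp (-(y + s) ^ 2)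
      = ∫ x in Ioi s, Real.exp (-x ^ 2) := by
    have := (measurePreserving_add_right (volume : Measure ℝ) s).setIntegral_preimage_emb
      (measurableEmbedding_addRight s) (fun x => Real.exp (-x ^ 2)) (Ioi s)
    simpa using this
  have hrefl : ∫ y in Iic (0:ℝ), Real.exp (-(y - s) ^ 2)
      = ∫ y in Ioi (0:ℝ), Real.exp (-(y + s) ^ 2) := by
    have h := integral_comp_neg_Iic (0:ℝ) (fun x => Real.exp (-(x + s) ^ 2))
    simp only [neg_zero] at h
    rw [← h]
    apply setIntegral_congr_fun measurableSet_Iic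
    intro y _
    have : (-y + s) ^ 2 = (y - s) ^ 2 := by ring
    simp [this]
  have hQ : gaussQ (Real.sqrt (2 * lam))
      = (1 / Real.sqrt Real.pi) * ∫ x in Ioi s, Real.exp (-x ^ 2) := by
    have hsqrt2 : Real.sqrt 2 * s = Real.sqrt (2 * lam) := by
      rw [hs, ← Real.sqrt_mul (by norm_num)]
    have hcv := integral_comp_mul_left_Ioi (fun t => stdGaussPDF t) s
      (show (0:ℝ) < Real.sqrt 2 by positivity)
    rw [hsqrt2] at hcv
    have heq : ∀ x : ℝ, stdGaussPDF (Real.sqrt 2 * x)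
        = (1 / Real.sqrt (2 * Real.pi)) * Real.exp (-x ^ 2) := by
      intro x
      unfold stdGaussPDF
      congr 1
      rw [mul_pow, Real.sq_sqrt (by norm_num : (0:ℝ) ≤ 2)]
      ring_nf
    have hL : (∫ x in Ioi s, stdGaussPDF (Real.sqrt 2 * x))
        = (1 / Real.sqrt (2 * Real.pi)) * ∫ x in Ioi s, Real.exp (-x ^ 2) := by
      simp_rw [heq]
      rw [integral_const_mul]
    rw [hL, smul_eq_mul] at hcv
    have hI : (∫ t in Ioi (Real.sqrt (2 * lam)), stdGaussPDF t)
        = Real.sqrt 2 * ((1 / Real.sqrt (2 * Real.pi)) * ∫ x in Ioi s, Real.exp (-x ^ 2)) := by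
      rw [hcv, ← mul_assoc, mul_inv_cancel₀ (by positivity : Real.sqrt 2 ≠ 0), one_mul]
    rw [gaussQ, hI, Real.sqrt_mul (by norm_num : (0:ℝ) ≤ 2) Real.pi]
    have h2 : Real.sqrt 2 ≠ 0 := by positivity
    have hp : Real.sqrt Real.pi ≠ 0 := by positivity
    field_simp
  have hsplit : (∫ y in Iic (0:ℝ), f y) + (∫ y in Ioi (0:ℝ), f y) = ∫ y, f y :=
    intervalIntegral.integral_Iic_add_Ioi hf_int.integrableOn hf_int.integrableOn
  have hT : 2 * ∫ x in Ioi s, Real.exp (-x ^ 2) ≤ ∫ y, f y := by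
    rw [← hsplit, ← htrans]
    linarith [hlow1, hlow2, hrefl]
  rw [hQ]
  have hc : (0:ℝ) ≤ 1 / Real.sqrt Real.pi := by positivity
  calc 2 * (1 / Real.sqrt Real.pi * ∫ x in Ioi s, Real.exp (-x ^ 2))
      = 1 / Real.sqrt Real.pi * (2 * ∫ x in Ioi s, Real.exp (-x ^ 2)) := by ring
    _ ≤ 1 / Real.sqrt Real.pi * ∫ y, f y := mul_le_mul_of_nonneg_left hT hc
end
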